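/- Let G be a finite simple graph with maximum degree Δ(G) ≥ 6. If mad(G) < 14/5, then the injective chromatic number of G satisfies χ_i(G) ≤ Δ(G) + 2. -/

import Mathlib

open SimpleGraph

/-- An injective coloring of `G`: any two distinct vertices with a common neighbor
receive distinct colors. -/
def IsInjColoring {V α : Type*} (G : SimpleGraph V) (c : V → α) : Prop :=
  ∀ ⦃u v : V⦄, u ≠ v → (∃ w, G.Adj u w ∧ G.Adj v w) → c u ≠ c v

/-- The injective chromatic number of `G`: the least `k` such that `G` has an
injective coloring with `k` colors. -/
noncomputable def injChromNum {V : Type*} (G : SimpleGraph V) : ℕ :=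
  sInf {k | ∃ c : V → Fin k, IsInjColoring G c}

open Finset

section Discharge
variable {V : Type*} [Fintype V] [DecidableEq V] (G : SimpleGraph V) [DecidableRel G.Adj]
  (S : Finset V)

def dSd (x : V) : ℕ := (G.neighborFinset x ∩ S).card
def Wst : Finset V := Finset.univ.filter (fun w => w ∉ S ∧ 2 ≤ dSd G S w)
def Tst : Finset V := S ∪ Wst G S
def Hadj (x y : V) : Prop :=
  G.Adj x y ∧ x ∈ Tst G S ∧ y ∈ Tst G S ∧ (x ∈ S ∨ y ∈ S)
instance : ∀ x y, Decidable (Hadj G S x y) := fun x y => by unfold Hadj; infer_instance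
def NH (x : V) : Finset V := Finset.univ.filter (fun y => Hadj G S x y)
def dHd (x : V) : ℕ := (NH G S x).card
def cset (v : V) : Finset V := S.filter (fun u => u ≠ v ∧ ∃ w, G.Adj u w ∧ G.Adj v w)

def rate (x y : V) : ℕ :=
  if dHd G S y = 2 then
    if dHd G S x = 4 ∧ (∃ z ∈ NH G S y, z ≠ x ∧ 6 ≤ dHd G S z) then 3
    else if 6 ≤ dHd G S x ∧ (∃ z ∈ NH G S y, z ≠ x ∧ dHd G S z = 4) then 5
    else 4
  else if dHd G S y = 3 ∧ 5 ≤ dHd G S x then 2 else 0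

def Amat (x y : V) : ℕ := if Hadj G S x y then rate G S x y else 0
def outgo (x : V) : ℕ := ∑ y, Amat G S x y
def income (x : V) : ℕ := ∑ y, Amat G S y x

variable {G S}

lemma hadj_symm {x y : V} (h : Hadj G S x y) : Hadj G S y x :=
  ⟨h.1.symm, h.2.2.1, h.2.1, h.2.2.2.symm⟩
lemma mem_NH {x y : V} : y ∈ NH G S x ↔ Hadj G S x y := by simp [NH]
lemma NH_subset (x : V) : NH G S x ⊆ G.neighborFinset x := fun y hy =>
  (G.mem_neighborFinset _ _).2 (mem_NH.1 hy).1
lemma dH_le_max (x : V) : dHd G S x ≤ G.maxDegree :=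
  le_trans (Finset.card_le_card (NH_subset x)) (G.degree_le_maxDegree x)
lemma W_mem {w : V} (hw : w ∈ Wst G S) : w ∉ S ∧ 2 ≤ dSd G S w := by simpa [Wst] using hw
lemma mem_T_iff {x : V} : x ∈ Tst G S ↔ x ∈ S ∨ x ∈ Wst G S := by simp [Tst]

lemma dS_le_dH {w : V} (hw : w ∈ Tst G S) : dSd G S w ≤ dHd G S w := by
  refine Finset.card_le_card ?_
  intro z hz
  rw [Finset.mem_inter, G.mem_neighborFinset] at hz
  rw [mem_NH]
  exact ⟨hz.1, hw, mem_T_iff.2 (Or.inl hz.2), Or.inr hz.2⟩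

lemma two_le_dH_of_W {w : V} (hw : w ∈ Wst G S) : 2 ≤ dHd G S w :=
  le_trans (W_mem hw).2 (dS_le_dH (mem_T_iff.2 (Or.inr hw)))

lemma nh_mem_S_of_not_S {w y : V} (hw : w ∉ S) (hy : y ∈ NH G S w) : y ∈ S :=
  (mem_NH.1 hy).2.2.2.resolve_left hw

lemma F1 (hbig : ∀ v ∈ S, G.maxDegree + 2 ≤ (cset G S v).card) {v : V} (hv : v ∈ S) :
    G.maxDegree + 2 ≤ ∑ w ∈ NH G S v, (dHd G S w - 1) := by
  have hvT : v ∈ Tst G S := mem_T_iff.2 (Or.inl hv)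
  have step1 : cset G S v ⊆
      (G.neighborFinset v).biUnion (fun w => (G.neighborFinset w ∩ S).erase v) := by
    intro u hu
    simp only [cset, Finset.mem_filter] at hu
    obtain ⟨huS, hune, w, hadj1, hadj2⟩ := hu
    refine Finset.mem_biUnion.2 ⟨w, (G.mem_neighborFinset _ _).2 hadj2, ?_⟩
    exact Finset.mem_erase.2 ⟨hune, Finset.mem_inter.2 ⟨(G.mem_neighborFinset _ _).2 hadj1.symm, huS⟩⟩
  have step2 : (cset G S v).card ≤ ∑ w ∈ G.neighborFinset v, (dSd G S w - 1) := by
    refine le_trans (Finset.card_le_card step1) (le_trans Finset.card_biUnion_le ?_)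
    refine Finset.sum_le_sum ?_
    intro w hw
    have hvmem : v ∈ G.neighborFinset w ∩ S :=
      Finset.mem_inter.2 ⟨(G.mem_neighborFinset _ _).2 ((G.mem_neighborFinset _ _).1 hw).symm, hv⟩
    rw [Finset.card_erase_of_mem hvmem]
    exact le_refl _
  have step3 : ∑ w ∈ G.neighborFinset v, (dSd G S w - 1) = ∑ w ∈ NH G S v, (dSd G S w - 1) := by
    refine (Finset.sum_subset (NH_subset v) ?_).symm
    intro w hw hwn
    have hadj : G.Adj v w := (G.mem_neighborFinset _ _).1 hw
    have hwT : w ∉ Tst G S := by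
      intro hwT
      exact hwn (mem_NH.2 ⟨hadj, hvT, hwT, Or.inl hv⟩)
    rw [mem_T_iff] at hwT
    push_neg at hwT
    obtain ⟨hwS, hwW⟩ := hwT
    have h1 : dSd G S w ≤ 1 := by
      by_contra hc
      push_neg at hc
      exact hwW (Finset.mem_filter.2 ⟨Finset.mem_univ _, hwS, hc⟩)
    simp [h1]
  have step4 : ∑ w ∈ NH G S v, (dSd G S w - 1) ≤ ∑ w ∈ NH G S v, (dHd G S w - 1) := by
    refine Finset.sum_le_sum fun w hw => ?_
    have := dS_le_dH (S := S) (mem_NH.1 hw).2.2.1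
    omega
  calc G.maxDegree + 2 ≤ (cset G S v).card := hbig v hv
    _ ≤ _ := step2
    _ = _ := step3
    _ ≤ _ := step4

/-- generic: bound a sum by singling out one element -/
lemma sum_bound1 {s : Finset V} {f : V → ℕ} {M : ℕ} (hM : ∀ w ∈ s, f w ≤ M) {a : V}
    (ha : a ∈ s) : ∑ w ∈ s, f w ≤ f a + (s.card - 1) * M := by
  rw [← Finset.add_sum_erase s f ha]
  have : ∑ w ∈ s.erase a, f w ≤ (s.erase a).card * M :=
    Finset.sum_le_card_nsmul _ _ _ (fun w hw => hM w (Finset.mem_of_mem_erase hw))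
  rw [Finset.card_erase_of_mem ha] at this
  omega

lemma sum_bound2 {s : Finset V} {f : V → ℕ} {M : ℕ} (hM : ∀ w ∈ s, f w ≤ M) {a b : V}
    (ha : a ∈ s) (hb : b ∈ s) (hab : a ≠ b) :
    ∑ w ∈ s, f w ≤ f a + f b + (s.card - 2) * M := by
  rw [← Finset.add_sum_erase s f ha]
  have hb' : b ∈ s.erase a := Finset.mem_erase.2 ⟨fun h => hab h.symm, hb⟩
  have h2 := sum_bound1 (s := s.erase a) (f := f) (M := M)
    (fun w hw => hM w (Finset.mem_of_mem_erase hw)) hb'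
  rw [Finset.card_erase_of_mem ha] at h2
  have hc : #s - 1 - 1 = #s - 2 := by omega
  rw [hc] at h2
  omega

lemma two_le_dH_of_T (hbig : ∀ v ∈ S, G.maxDegree + 2 ≤ (cset G S v).card) {x : V}
    (hx : x ∈ Tst G S) : 2 ≤ dHd G S x := by
  rcases mem_T_iff.1 hx with h | h
  · by_contra hc
    push_neg at hc
    have h1 := F1 hbig h
    have h2 : ∑ w ∈ NH G S x, (dHd G S w - 1) ≤ (NH G S x).card * (G.maxDegree - 1) :=
      Finset.sum_le_card_nsmul _ _ _ (fun w _ => by have := dH_le_max (G := G) (S := S) w; omega)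
    have hle : (NH G S x).card ≤ 1 := by unfold dHd at hc; omega
    have h3 : (NH G S x).card * (G.maxDegree - 1) ≤ 1 * (G.maxDegree - 1) :=
      Nat.mul_le_mul_right _ hle
    omega
  · exact two_le_dH_of_W h

/-- For an S-vertex of H-degree 2 and one of its neighbors `y`, the other neighbor `z`
satisfies a strong degree-sum bound. -/
lemma F1_pair_mem (hbig : ∀ v ∈ S, G.maxDegree + 2 ≤ (cset G S v).card) {v y : V}
    (hv : v ∈ S) (hd : dHd G S v = 2) (hy : y ∈ NH G S v) :
    ∃ z, z ≠ y ∧ z ∈ NH G S v ∧ NH G S v = {y, z} ∧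
      G.maxDegree + 2 ≤ (dHd G S y - 1) + (dHd G S z - 1) := by
  obtain ⟨a, b, hab, hset⟩ := Finset.card_eq_two.1 hd
  have hsum := F1 hbig hv
  rw [hset, Finset.sum_pair hab] at hsum
  rw [hset] at hy ⊢
  rcases Finset.mem_insert.1 hy with rfl | hyb
  · refine ⟨b, fun h => hab h.symm, by simp, ?_, hsum⟩
    rfl
  · rw [Finset.mem_singleton] at hyb
    subst hyb
    exact ⟨a, fun h => hab h, by simp, Finset.pair_comm _ _, by omega⟩

/-- no two H-vertices of degree 2 are H-adjacent -/
lemma no_22 (hbig : ∀ v ∈ S, G.maxDegree + 2 ≤ (cset G S v).card) (hΔ : 6 ≤ G.maxDegree)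
    {x y : V} (h : Hadj G S x y) (hx : dHd G S x = 2) : 3 ≤ dHd G S y := by
  by_contra hc
  push_neg at hc
  have hy2 : dHd G S y = 2 := by
    have := two_le_dH_of_T hbig h.2.2.1
    omega
  have key : ∀ u w : V, u ∈ S → Hadj G S u w → dHd G S u = 2 → dHd G S w = 2 → False := by
    intro u w hu hadj hdu hdw
    obtain ⟨z, hzw, hz, _, hsum⟩ := F1_pair_mem hbig hu hdu (mem_NH.2 hadj)
    have := dH_le_max (G := G) (S := S) z
    omega
  rcases h.2.2.2 with hS | hS
  · exact key x y hS h hx hy2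
  · exact key y x hS (hadj_symm h) hy2 hx

lemma outgo_eq (x : V) : outgo G S x = ∑ y ∈ NH G S x, rate G S x y := by
  unfold outgo Amat NH
  rw [Finset.sum_filter]

lemma amat_le_income (x a : V) : Amat G S a x ≤ income G S x := by
  unfold income
  exact Finset.single_le_sum (f := fun y => Amat G S y x) (fun y _ => Nat.zero_le _)
    (Finset.mem_univ a)

lemma pair_le_income {x a b : V} (hab : a ≠ b) :
    Amat G S a x + Amat G S b x ≤ income G S x := by
  unfold income
  calc Amat G S a x + Amat G S b x = ∑ y ∈ ({a, b} : Finset V), Amat G S y x :=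
        (Finset.sum_pair (f := fun y => Amat G S y x) hab).symm
    _ ≤ _ := Finset.sum_le_sum_of_subset (Finset.subset_univ _)

lemma rate_le_five (x y : V) : rate G S x y ≤ 5 := by
  unfold rate
  split_ifs <;> omega

lemma rate_le_four {x y : V} (h : dHd G S x ≤ 5) : rate G S x y ≤ 4 := by
  unfold rate
  split_ifs with h1 h2 h3 h4
  · omega
  · exact absurd h3.1 (by omega)
  · omega
  · omega
  · omega

lemma rate_eq_zero_of_big {x y : V} (h : 4 ≤ dHd G S y) : rate G S x y = 0 := by
  unfold rate
  rw [if_neg (by omega), if_neg (fun hc => by omega)]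

lemma exists_other {x a b : V} (hab : a ≠ b) (hset : NH G S x = {a, b}) (P : V → Prop) :
    (∃ z ∈ NH G S x, z ≠ a ∧ P z) ↔ P b := by
  rw [hset]
  constructor
  · rintro ⟨z, hz, hza, hP⟩
    rcases Finset.mem_insert.1 hz with rfl | hz
    · exact absurd rfl hza
    · rw [Finset.mem_singleton] at hz
      subst hz
      exact hP
  · intro h
    exact ⟨b, by simp, fun h' => hab h'.symm, h⟩

section Main
variable (hbig : ∀ v ∈ S, G.maxDegree + 2 ≤ (cset G S v).card) (hΔ : 6 ≤ G.maxDegree)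
include hbig hΔ

lemma vert2 {x : V} (hd : dHd G S x = 2) :
    28 + outgo G S x ≤ 10 * dHd G S x + income G S x := by
  have hout : outgo G S x = 0 := by
    rw [outgo_eq]
    refine Finset.sum_eq_zero fun y hy => ?_
    have h3 : 3 ≤ dHd G S y := no_22 hbig hΔ (mem_NH.1 hy) hd
    unfold rate
    rw [if_neg (by omega), if_neg (fun hc => by omega)]
  obtain ⟨a, b, hab, hset⟩ := Finset.card_eq_two.1 hd
  have haNH : a ∈ NH G S x := by rw [hset]; simp
  have hbNH : b ∈ NH G S x := by rw [hset]; simp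
  have hAa : Hadj G S a x := hadj_symm (mem_NH.1 haNH)
  have hAb : Hadj G S b x := hadj_symm (mem_NH.1 hbNH)
  have ha3 : 3 ≤ dHd G S a := no_22 hbig hΔ (mem_NH.1 haNH) hd
  have hb3 : 3 ≤ dHd G S b := no_22 hbig hΔ (mem_NH.1 hbNH) hd
  have hset' : NH G S x = {b, a} := by rw [hset]; exact Finset.pair_comm _ _
  have ea : rate G S a x =
      if dHd G S a = 4 ∧ 6 ≤ dHd G S b then 3
      else if 6 ≤ dHd G S a ∧ dHd G S b = 4 then 5 else 4 := by
    unfold rate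
    rw [if_pos hd]
    simp only [exists_other hab hset]
  have eb : rate G S b x =
      if dHd G S b = 4 ∧ 6 ≤ dHd G S a then 3
      else if 6 ≤ dHd G S b ∧ dHd G S a = 4 then 5 else 4 := by
    unfold rate
    rw [if_pos hd]
    simp only [exists_other hab.symm hset']
  have h8 : 8 ≤ rate G S a x + rate G S b x := by
    rw [ea, eb]
    split_ifs <;> omega
  have hinc : 8 ≤ income G S x := by
    have := pair_le_income (G := G) (S := S) (x := x) hab
    rw [Amat, if_pos hAa, Amat, if_pos hAb] at this
    omega
  omega

lemma rate_eq_of_three {x : V} (hd : dHd G S x = 3) (y : V) :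
    rate G S x y = if dHd G S y = 2 then 4 else 0 := by
  clear hbig hΔ
  unfold rate
  rw [if_neg (fun hc : dHd G S x = 4 ∧ _ => by omega),
    if_neg (fun hc : 6 ≤ dHd G S x ∧ _ => by omega),
    if_neg (fun hc : dHd G S y = 3 ∧ 5 ≤ dHd G S x => by omega)]

/-- an S-vertex H-adjacent to an H-2-vertex has, for low own degree, useful bound -/
lemma not_low_adj_two {x y : V} (hy : y ∈ NH G S x) (hyS : y ∈ S) (hd2 : dHd G S y = 2)
    (hlow : dHd G S x ≤ 3) : False := by
  obtain ⟨z, hzx, hz, _, hsum⟩ := F1_pair_mem hbig hyS hd2 (mem_NH.2 (hadj_symm (mem_NH.1 hy)))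
  have := dH_le_max (G := G) (S := S) z
  omega

lemma vert3 {x : V} (hx : x ∈ Tst G S) (hd : dHd G S x = 3) :
    28 + outgo G S x ≤ 10 * dHd G S x + income G S x := by
  classical
  set k := ((NH G S x).filter (fun y => dHd G S y = 2)).card with hk
  have hout : outgo G S x = 4 * k := by
    rw [outgo_eq, hk]
    rw [Finset.sum_congr rfl (fun y _ => rate_eq_of_three hbig hΔ hd y)]
    rw [← Finset.sum_filter, Finset.sum_const, smul_eq_mul, mul_comm]
  by_cases hxS : x ∈ S
  · have hcard : (NH G S x).card = 3 := hd
    have hk1 : k ≤ 1 := by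
      by_contra hc
      push_neg at hc
      obtain ⟨y1, hy1, y2, hy2, h12⟩ := Finset.one_lt_card.1 hc
      rw [Finset.mem_filter] at hy1 hy2
      have hsum := F1 hbig hxS
      have hb := sum_bound2 (s := NH G S x) (f := fun w => dHd G S w - 1)
        (M := G.maxDegree - 1)
        (fun w _ => by
          show dHd G S w - 1 ≤ G.maxDegree - 1
          have := dH_le_max (G := G) (S := S) w; omega) hy1.1 hy2.1 h12
      rw [hcard] at hb
      beta_reduce at hb
      have h1 := hy1.2
      have h2 := hy2.2
      omega
    rcases Nat.eq_zero_or_pos k with hk0 | hkpos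
    · omega
    · -- income ≥ 2 : there is a neighbor of degree ≥ 5
      obtain ⟨y, hy⟩ := Finset.card_pos.1 hkpos
      rw [Finset.mem_filter] at hy
      have hbig5 : ∃ z ∈ NH G S x, 5 ≤ dHd G S z := by
        by_contra hc
        push_neg at hc
        have hsum := F1 hbig hxS
        have hb := sum_bound1 (s := NH G S x) (f := fun w => dHd G S w - 1) (M := 3)
          (fun w hw => by
            show dHd G S w - 1 ≤ 3
            have := hc w hw; omega) hy.1
        rw [hcard] at hb
        beta_reduce at hb
        have h1 := hy.2
        omega
      obtain ⟨z, hz, hz5⟩ := hbig5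
      have hrz : rate G S z x = 2 := by
        unfold rate
        rw [if_neg (by omega), if_pos ⟨hd, hz5⟩]
      have hinc : 2 ≤ income G S x := by
        have h1 := amat_le_income (G := G) (S := S) x z
        rw [Amat, if_pos (hadj_symm (mem_NH.1 hz))] at h1
        omega
      omega
  · -- x ∉ S : no 2-neighbors at all
    have hk0 : k = 0 := by
      rw [hk, Finset.card_eq_zero, Finset.filter_eq_empty_iff]
      intro y hy hd2
      exact not_low_adj_two hbig hΔ hy (nh_mem_S_of_not_S hxS hy) hd2 (by omega)
    omega

lemma vert4 {x : V} (hx : x ∈ Tst G S) (hd : dHd G S x = 4) :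
    28 + outgo G S x ≤ 10 * dHd G S x + income G S x := by
  have hcard : (NH G S x).card = 4 := hd
  have h12 : outgo G S x ≤ 12 := by
    by_cases hxS : x ∈ S
    · have hbig3 : ∃ z ∈ NH G S x, 3 ≤ dHd G S z := by
        by_contra hc
        push_neg at hc
        have hsum := F1 hbig hxS
        have hb : ∑ w ∈ NH G S x, (dHd G S w - 1) ≤ (NH G S x).card * 1 :=
          Finset.sum_le_card_nsmul _ _ _ (fun w hw => by
            show dHd G S w - 1 ≤ 1
            have := hc w hw; omega)
        rw [hcard] at hb
        omega
      obtain ⟨z, hz, hz3⟩ := hbig3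
      have hrz : rate G S x z = 0 := by
        unfold rate
        rw [if_neg (by omega), if_neg (fun hc : dHd G S z = 3 ∧ 5 ≤ dHd G S x => by omega)]
      have hb := sum_bound1 (s := NH G S x) (f := fun y => rate G S x y) (M := 4)
        (fun w _ => rate_le_four (by omega)) hz
      rw [hcard] at hb
      beta_reduce at hb
      rw [outgo_eq]
      omega
    · -- x ∈ W : each 2-neighbor triggers the 3-rate
      have hr3 : ∀ y ∈ NH G S x, rate G S x y ≤ 3 := by
        intro y hy
        by_cases hd2 : dHd G S y = 2
        · have hyS : y ∈ S := nh_mem_S_of_not_S hxS hy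
          obtain ⟨z, hzx, hz, _, hsum⟩ :=
            F1_pair_mem hbig hyS hd2 (mem_NH.2 (hadj_symm (mem_NH.1 hy)))
          have hz6 : 6 ≤ dHd G S z := by omega
          unfold rate
          rw [if_pos hd2, if_pos ⟨hd, z, hz, hzx, hz6⟩]
        · rcases Nat.lt_or_ge (dHd G S y) 4 with hlt | hge
          · unfold rate
            rw [if_neg hd2, if_neg (fun hc : dHd G S y = 3 ∧ 5 ≤ dHd G S x => by omega)]
            omega
          · rw [rate_eq_zero_of_big hge]
            omega
      rw [outgo_eq]
      calc ∑ y ∈ NH G S x, rate G S x y ≤ (NH G S x).card * 3 :=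
            Finset.sum_le_card_nsmul _ _ _ hr3
        _ = 12 := by rw [hcard]
  omega

lemma vert_main {x : V} (hx : x ∈ Tst G S) :
    28 + outgo G S x ≤ 10 * dHd G S x + income G S x := by
  have h2 := two_le_dH_of_T hbig hx
  rcases Nat.lt_or_ge (dHd G S x) 6 with hlt | hge
  · rcases (show dHd G S x = 2 ∨ dHd G S x = 3 ∨ dHd G S x = 4 ∨ dHd G S x = 5 by omega)
      with hd | hd | hd | hd
    · exact vert2 hbig hΔ hd
    · exact vert3 hbig hΔ hx hd
    · exact vert4 hbig hΔ hx hd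
    · -- degree 5
      have : outgo G S x ≤ 20 := by
        rw [outgo_eq]
        calc ∑ y ∈ NH G S x, rate G S x y ≤ (NH G S x).card * 4 :=
              Finset.sum_le_card_nsmul _ _ _ (fun y _ => rate_le_four (by omega))
          _ = 20 := by rw [show (NH G S x).card = 5 from hd]
      omega
  · have : outgo G S x ≤ dHd G S x * 5 := by
      rw [outgo_eq]
      exact Finset.sum_le_card_nsmul _ _ _ (fun y _ => rate_le_five _ _)
    omega

lemma global :
    14 * (Tst G S).card ≤ 5 * ∑ x, dHd G S x := by
  have hmain : ∑ x ∈ Tst G S, (28 + outgo G S x) ≤ ∑ x ∈ Tst G S, (10 * dHd G S x + income G S x) :=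
    Finset.sum_le_sum (fun x hx => vert_main hbig hΔ hx)
  have hout0 : ∀ x, x ∉ Tst G S → outgo G S x = 0 := fun x hx =>
    Finset.sum_eq_zero (fun y _ => by
      rw [Amat, if_neg (fun h : Hadj G S x y => hx h.2.1)])
  have hinc0 : ∀ x, x ∉ Tst G S → income G S x = 0 := fun x hx =>
    Finset.sum_eq_zero (fun y _ => by
      rw [Amat, if_neg (fun h : Hadj G S y x => hx h.2.2.1)])
  have hd0 : ∀ x, x ∉ Tst G S → dHd G S x = 0 := fun x hx => by
    rw [dHd, NH, Finset.card_eq_zero, Finset.filter_eq_empty_iff]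
    exact fun y _ h => hx h.2.1
  have hOsum : ∑ x ∈ Tst G S, outgo G S x = ∑ x, outgo G S x :=
    Finset.sum_subset (Finset.subset_univ _) (fun x _ hx => hout0 x hx)
  have hIsum : ∑ x ∈ Tst G S, income G S x = ∑ x, income G S x :=
    Finset.sum_subset (Finset.subset_univ _) (fun x _ hx => hinc0 x hx)
  have hDsum : ∑ x ∈ Tst G S, dHd G S x = ∑ x, dHd G S x :=
    Finset.sum_subset (Finset.subset_univ _) (fun x _ hx => hd0 x hx)
  have hOI : ∑ x, outgo G S x = ∑ x, income G S x := by
    unfold outgo income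
    exact Finset.sum_comm
  rw [Finset.sum_add_distrib, Finset.sum_add_distrib, Finset.sum_const, smul_eq_mul,
    hOsum, hIsum, ← Finset.mul_sum, hDsum, hOI] at hmain
  omega

end Main

variable (G S) in
def Hgraph : SimpleGraph V where
  Adj := Hadj G S
  symm := ⟨fun _ _ h => hadj_symm h⟩
  loopless := ⟨fun x h => G.loopless.irrefl x h.1⟩

instance : DecidableRel (Hgraph G S).Adj := fun x y =>
  (inferInstance : Decidable (Hadj G S x y))

lemma hgraph_degree (x : V) : (Hgraph G S).degree x = dHd G S x := by
  have : (Hgraph G S).neighborFinset x = NH G S x := by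
    ext y
    rw [SimpleGraph.mem_neighborFinset, mem_NH]
    exact Iff.rfl
  rw [SimpleGraph.degree, this, dHd]

variable (G S) in
def HsubG : G.Subgraph where
  verts := ↑(Tst G S)
  Adj := Hadj G S
  adj_sub := fun h => h.1
  edge_vert := fun h => Finset.mem_coe.2 h.2.1
  symm := ⟨fun _ _ h => hadj_symm h⟩

lemma hsub_edgeSet : (HsubG G S).edgeSet = (Hgraph G S).edgeSet := by
  ext e
  induction e using Sym2.ind with
  | _ x y =>
    rw [SimpleGraph.Subgraph.mem_edgeSet, SimpleGraph.mem_edgeSet]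
    exact Iff.rfl

/-- contradiction step: if every vertex of `S` has ≥ Δ+2 conflicts within `S`,
then `mad` is violated -/
lemma low_exists (hΔ : 6 ≤ G.maxDegree)
    (hmad : ∀ H : G.Subgraph, H.verts.Nonempty →
      (2 * H.edgeSet.ncard : ℚ) / H.verts.ncard < 14 / 5)
    (hS : S.Nonempty) : ∃ v ∈ S, (cset G S v).card ≤ G.maxDegree + 1 := by
  by_contra hcon
  push_neg at hcon
  have hbig : ∀ v ∈ S, G.maxDegree + 2 ≤ (cset G S v).card := fun v hv => hcon v hv
  have hTne : (Tst G S).Nonempty := hS.mono (Finset.subset_union_left)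
  have hvertne : (HsubG G S).verts.Nonempty := by
    obtain ⟨v, hv⟩ := hTne
    exact ⟨v, Finset.mem_coe.2 hv⟩
  have hlt := hmad (HsubG G S) hvertne
  -- edge count
  have hdegsum : ∑ x, (Hgraph G S).degree x = 2 * (Hgraph G S).edgeFinset.card :=
    SimpleGraph.sum_degrees_eq_twice_card_edges _
  have hdeq : ∑ x, dHd G S x = 2 * (Hgraph G S).edgeFinset.card := by
    rw [← hdegsum]
    exact Finset.sum_congr rfl (fun x _ => (hgraph_degree x).symm)
  have hglob := global hbig hΔ
  rw [hdeq] at hglob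
  -- translate the subgraph quantities
  have hecard : (HsubG G S).edgeSet.ncard = (Hgraph G S).edgeFinset.card := by
    rw [hsub_edgeSet, Set.ncard_eq_toFinset_card']
    congr 1
  have hvcard : (HsubG G S).verts.ncard = (Tst G S).card := Set.ncard_coe_finset _
  rw [hecard, hvcard] at hlt
  set e := (Hgraph G S).edgeFinset.card
  set t := (Tst G S).card
  have htpos : 0 < t := Finset.card_pos.2 hTne
  have htpos' : (0 : ℚ) < (t : ℚ) := by exact_mod_cast htpos
  rw [div_lt_div_iff₀ htpos' (by norm_num)] at hlt
  have : (2 * (e:ℚ)) * 5 = ((10 * e : ℕ) : ℚ) := by push_cast; ring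
  rw [this] at hlt
  have h14 : (14 : ℚ) * t = ((14 * t : ℕ) : ℚ) := by push_cast; ring
  rw [h14] at hlt
  have hlt' : (10 * e) < 14 * t := by exact_mod_cast hlt
  omega

end Discharge

section Greedy
variable {V : Type*} [Fintype V] [DecidableEq V] (G : SimpleGraph V) [DecidableRel G.Adj]

lemma color_aux
    (hlow : ∀ S : Finset V, S.Nonempty → ∃ v ∈ S, (cset G S v).card ≤ G.maxDegree + 1) :
    ∀ (m : ℕ) (S : Finset V), S.card ≤ m → ∃ c : V → Fin (G.maxDegree + 2),
      ∀ u ∈ S, ∀ v ∈ S, u ≠ v → (∃ w, G.Adj u w ∧ G.Adj v w) → c u ≠ c v := by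
  intro m
  induction m with
  | zero =>
    intro S hS
    rw [Nat.le_zero, Finset.card_eq_zero] at hS
    subst hS
    exact ⟨fun _ => ⟨0, by omega⟩, by simp⟩
  | succ m ih =>
    intro S hS
    rcases S.eq_empty_or_nonempty with rfl | hne
    · exact ⟨fun _ => ⟨0, by omega⟩, by simp⟩
    obtain ⟨v, hv, hcard⟩ := hlow S hne
    obtain ⟨c, hc⟩ := ih (S.erase v) (by rw [Finset.card_erase_of_mem hv]; omega)
    have hFcard : ((cset G S v).image c).card < G.maxDegree + 2 :=
      lt_of_le_of_lt Finset.card_image_le (by omega)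
    have hex : ∃ a : Fin (G.maxDegree + 2), a ∉ (cset G S v).image c := by
      by_contra hcon
      push_neg at hcon
      have hsub : (Finset.univ : Finset (Fin (G.maxDegree + 2))) ⊆ (cset G S v).image c :=
        fun a _ => hcon a
      have := Finset.card_le_card hsub
      rw [Finset.card_univ, Fintype.card_fin] at this
      omega
    obtain ⟨a, ha⟩ := hex
    refine ⟨Function.update c v a, ?_⟩
    intro u hu u' hu' hne' hcom
    by_cases h1 : u = v
    · subst h1
      have hne2 : u' ≠ u := hne'.symm
      have hmem : u' ∈ cset G S u := Finset.mem_filter.2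
        ⟨hu', hne2, hcom.imp (fun w hw => ⟨hw.2, hw.1⟩)⟩
      rw [Function.update_self, Function.update_of_ne hne2]
      intro h
      exact ha (h ▸ Finset.mem_image_of_mem c hmem)
    · by_cases h2 : u' = v
      · subst h2
        have hmem : u ∈ cset G S u' := Finset.mem_filter.2 ⟨hu, h1, hcom⟩
        rw [Function.update_self, Function.update_of_ne h1]
        intro h
        exact ha (h.symm ▸ Finset.mem_image_of_mem c hmem)
      · rw [Function.update_of_ne h1, Function.update_of_ne h2]
        exact hc u (Finset.mem_erase.2 ⟨h1, hu⟩) u' (Finset.mem_erase.2 ⟨h2, hu'⟩) hne' hcom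

end Greedy

/-- If `Δ(G) ≥ 6` and `mad(G) < 14/5`, then `χᵢ(G) ≤ Δ(G) + 2`. -/
theorem injChromNum_le_of_maxDegree_ge_six {V : Type*} [Fintype V]
    (G : SimpleGraph V) [DecidableRel G.Adj]
    (hΔ : 6 ≤ G.maxDegree)
    (hmad : ∀ H : G.Subgraph, H.verts.Nonempty →
      (2 * H.edgeSet.ncard : ℚ) / H.verts.ncard < 14 / 5) :
    injChromNum G ≤ G.maxDegree + 2 := by
  letI : DecidableEq V := Classical.decEq V
  have hlow : ∀ S : Finset V, S.Nonempty → ∃ v ∈ S, (cset G S v).card ≤ G.maxDegree + 1 :=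
    fun S hS => low_exists hΔ hmad hS
  obtain ⟨c, hc⟩ := color_aux G hlow (Finset.univ.card) Finset.univ le_rfl
  have hcol : IsInjColoring G c := fun u v hne hw =>
    hc u (Finset.mem_univ u) v (Finset.mem_univ v) hne hw
  exact Nat.sInf_le ⟨c, hcol⟩
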